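/- Stability of the Newton step (second half of Lemma 3.1): suppose α := Mν⁻²‖f‖ < 1, û ∈ V satisfies ‖û‖ ≤ ν⁻¹‖f‖, and u' ∈ V is a Newton update of û, i.e. ν⟨u',v⟩ + b(û,u',v) + b(u',û,v) − b(û,û,v) = f(v) for all v ∈ V. Then ‖u'‖ ≤ ν⁻¹(1+α)(1−α)⁻¹‖f‖. -/

import Mathlib

open scoped RealInnerProductSpace

/-- Stability of the Newton step: if `α := Mν⁻²‖f‖ < 1`, `‖uhat‖ ≤ ν⁻¹‖f‖`, and
`u'` is a Newton update of `uhat`, then `‖u'‖ ≤ ν⁻¹(1+α)(1−α)⁻¹‖f‖`. -/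
theorem newton_step_stability
    {V : Type*} [NormedAddCommGroup V] [InnerProductSpace ℝ V]
    (b : V →ₗ[ℝ] V →ₗ[ℝ] V →ₗ[ℝ] ℝ)
    (hskew : ∀ z w : V, b z w w = 0)
    (M : ℝ) (hM : 0 < M)
    (hbound : ∀ z w v : V, |b z w v| ≤ M * ‖z‖ * ‖w‖ * ‖v‖)
    (f : V →L[ℝ] ℝ) (ν : ℝ) (hν : 0 < ν)
    (α : ℝ) (hα : α = M * ν⁻¹ ^ 2 * ‖f‖) (hα1 : α < 1)
    (uhat u' : V)
    (huhatstab : ‖uhat‖ ≤ ν⁻¹ * ‖f‖)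
    (hNewton : ∀ v : V, ν * ⟪u', v⟫ + b uhat u' v + b u' uhat v - b uhat uhat v = f v) :
    ‖u'‖ ≤ ν⁻¹ * (1 + α) * (1 - α)⁻¹ * ‖f‖ := by
  set n := ‖u'‖ with hn
  set F := ‖f‖ with hF
  have hn0 : 0 ≤ n := norm_nonneg _
  have hF0 : 0 ≤ F := norm_nonneg _
  have hα0 : 0 ≤ α := by
    rw [hα]; positivity
  rcases eq_or_lt_of_le hn0 with h0 | hpos
  · rw [← h0]
    have : 0 ≤ ν⁻¹ * (1 + α) * (1 - α)⁻¹ * F := by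
      have h1 : (0:ℝ) < 1 - α := by linarith
      positivity
    linarith
  -- main case n > 0
  have key := hNewton u'
  rw [hskew uhat u', real_inner_self_eq_norm_sq] at key
  have hfu : |f u'| ≤ F * n := f.le_opNorm u'
  have hb1 : |b u' uhat u'| ≤ M * n * ‖uhat‖ * n := hbound u' uhat u'
  have hb2 : |b uhat uhat u'| ≤ M * ‖uhat‖ * ‖uhat‖ * n := hbound uhat uhat u'
  have huh0 : 0 ≤ ‖uhat‖ := norm_nonneg _
  have hb1' : |b u' uhat u'| ≤ M * ν⁻¹ * F * n ^ 2 := by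
    calc |b u' uhat u'| ≤ M * n * ‖uhat‖ * n := hb1
      _ ≤ M * n * (ν⁻¹ * F) * n := by
          have := mul_le_mul_of_nonneg_left huhatstab (by positivity : (0:ℝ) ≤ M * n)
          nlinarith
      _ = M * ν⁻¹ * F * n ^ 2 := by ring
  have hb2' : |b uhat uhat u'| ≤ M * ν⁻¹ ^ 2 * F ^ 2 * n := by
    calc |b uhat uhat u'| ≤ M * ‖uhat‖ * ‖uhat‖ * n := hb2
      _ ≤ M * (ν⁻¹ * F) * (ν⁻¹ * F) * n := by
          have h1 : M * ‖uhat‖ * ‖uhat‖ ≤ M * (ν⁻¹ * F) * (ν⁻¹ * F) := by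
            nlinarith [mul_le_mul huhatstab huhatstab huh0 (by positivity : (0:ℝ) ≤ ν⁻¹ * F)]
          nlinarith
      _ = M * ν⁻¹ ^ 2 * F ^ 2 * n := by ring
  -- ν n² ≤ F n + α ν n² + α F n
  have hνinv : ν * ν⁻¹ = 1 := mul_inv_cancel₀ (ne_of_gt hν)
  have hmain : ν * n ^ 2 ≤ F * n + α * ν * n ^ 2 + α * F * n := by
    have h1 : ν * n ^ 2 = f u' - b u' uhat u' + b uhat uhat u' := by linarith
    have h2 : f u' ≤ F * n := le_trans (le_abs_self _) hfu
    have h3 : -(b u' uhat u') ≤ M * ν⁻¹ * F * n ^ 2 := le_trans (neg_le_abs _) hb1'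
    have h4 : b uhat uhat u' ≤ M * ν⁻¹ ^ 2 * F ^ 2 * n := le_trans (le_abs_self _) hb2'
    have hαν : α * ν = M * ν⁻¹ * F := by
      rw [hα]; field_simp
    have hαF : α * F = M * ν⁻¹ ^ 2 * F ^ 2 := by
      rw [hα]; ring
    rw [hαν, hαF]
    linarith
  -- divide by n and (1-α)ν
  have h1α : (0:ℝ) < 1 - α := by linarith
  have hdiv : (1 - α) * ν * n ≤ (1 + α) * F := by
    have := hmain
    have h5 : n * ((1 - α) * ν * n) ≤ n * ((1 + α) * F) := by nlinarith
    exact le_of_mul_le_mul_left h5 hpos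
  rw [show ν⁻¹ * (1 + α) * (1 - α)⁻¹ * F = ((1 + α) * F) / ((1 - α) * ν) from by
    rw [div_eq_mul_inv, mul_inv]; ring]
  rw [le_div_iff₀ (by positivity)]
  calc n * ((1 - α) * ν) = (1 - α) * ν * n := by ring
    _ ≤ (1 + α) * F := hdiv
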